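/- For every positive integer n, the number of permutations of {1,...,n} avoiding the pattern 123 equals the n-th Catalan number. -/

import Mathlib

/-- Classical pattern containment: `π` contains the pattern `τ` if some subsequence of `π`
(one-line notation) is order-isomorphic to `τ`. -/
def PattContains {k n : ℕ} (τ : Fin k → Fin k) (π : Fin n → Fin n) : Prop :=
  ∃ f : Fin k ↪o Fin n, ∀ a b : Fin k, τ a < τ b ↔ π (f a) < π (f b)

/-- The number of permutations of `{1,...,n}` avoiding the pattern `τ`. -/
noncomputable def avoiders {k : ℕ} (τ : Fin k → Fin k) (n : ℕ) : ℕ :=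
  Nat.card {π : Equiv.Perm (Fin n) // ¬ PattContains τ ⇑π}

namespace Av123

open Finset

/-- avoidance of an increasing triple -/
def AV {n : ℕ} (π : Fin n → Fin n) : Prop :=
  ∀ ⦃i j k : Fin n⦄, i < j → j < k → π i < π j → ¬ π j < π k

instance {n} (π : Fin n → Fin n) : Decidable (AV π) := by unfold AV; infer_instance

/-- the first `m` entries of `π` are strictly decreasing -/
def Dec {n : ℕ} (π : Fin n → Fin n) (m : ℕ) : Prop :=
  ∀ ⦃a b : Fin n⦄, a < b → (b : ℕ) < m → π b < π a

instance {n} (π : Fin n → Fin n) (m : ℕ) : Decidable (Dec π m) := by unfold Dec; infer_instance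

lemma Dec.anti {n} {π : Fin n → Fin n} {m m' : ℕ} (h : m' ≤ m) (hd : Dec π m) : Dec π m' :=
  fun _ _ hab hb => hd hab (lt_of_lt_of_le hb h)

lemma dec_zero {n} (π : Fin n → Fin n) : Dec π 0 := fun _ _ _ hb => absurd hb (by omega)

lemma dec_one {n} (π : Fin n → Fin n) : Dec π 1 := by
  intro a b hab hb
  have : (a : ℕ) < (b : ℕ) := hab
  omega

/-- the number of active sites (label in the generating tree) -/
def labelN {n : ℕ} (π : Fin n → Fin n) : ℕ :=
  (univ.filter fun i : Fin (n+1) => Dec π (i : ℕ)).card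

lemma mem_lowerset_iff_lt_card {N : ℕ} {S : Finset (Fin N)}
    (h : ∀ ⦃i j : Fin N⦄, i ≤ j → j ∈ S → i ∈ S) (i : Fin N) : i ∈ S ↔ (i : ℕ) < S.card := by
  constructor
  · intro hi
    have hsub : Finset.Iic i ⊆ S := fun j hj => h (Finset.mem_Iic.mp hj) hi
    have := Finset.card_le_card hsub
    rw [Fin.card_Iic] at this
    omega
  · intro hc
    by_contra hi
    have hsub : S ⊆ Finset.Iio i := by
      intro j hj
      rw [Finset.mem_Iio]
      by_contra hij
      exact hi (h (le_of_not_gt hij) hj)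
    have := Finset.card_le_card hsub
    rw [Fin.card_Iio] at this
    omega

lemma dec_iff_lt_labelN {n : ℕ} (π : Fin n → Fin n) (i : Fin (n+1)) :
    Dec π (i : ℕ) ↔ (i : ℕ) < labelN π := by
  refine mem_lowerset_iff_lt_card (fun a b hab hb => ?_) i |>.symm.trans ?_ |>.symm
  · rw [Finset.mem_filter] at hb ⊢
    exact ⟨Finset.mem_univ _, hb.2.anti hab⟩
  · simp [labelN]

lemma labelN_le {n : ℕ} (π : Fin n → Fin n) : labelN π ≤ n + 1 := by
  classical
  calc labelN π ≤ (univ : Finset (Fin (n+1))).card := Finset.card_le_card (Finset.filter_subset _ _)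
  _ = n + 1 := by simp

lemma two_le_labelN {n : ℕ} (hn : 1 ≤ n) (π : Fin n → Fin n) : 2 ≤ labelN π := by
  have h1 : ((1 : Fin (n+1)) : ℕ) = 1 := by
    rw [Fin.val_one']; exact Nat.mod_eq_of_lt (by omega)
  have := (dec_iff_lt_labelN π 1).mp (by rw [h1]; exact dec_one π)
  omega


section
variable {n : ℕ}

lemma patt_iff {n : ℕ} (π : Fin n → Fin n) :
    PattContains ![0,1,2] π ↔ ∃ i j k : Fin n, i < j ∧ j < k ∧ π i < π j ∧ π j < π k := by
  constructor
  · rintro ⟨f, hf⟩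
    exact ⟨f 0, f 1, f 2, f.strictMono (by decide), f.strictMono (by decide),
      (hf 0 1).mp (by decide), (hf 1 2).mp (by decide)⟩
  · rintro ⟨i, j, k, hij, hjk, h1, h2⟩
    have hmono : StrictMono (![i, j, k] : Fin 3 → Fin n) := by
      intro a b hab
      fin_cases a <;> fin_cases b <;>
        first
          | exact absurd hab (by decide)
          | exact hij | exact hjk | exact hij.trans hjk
    have key : ∀ a b : Fin 3, a < b → π (![i,j,k] a) < π (![i,j,k] b) := by
      intro a b hab
      fin_cases a <;> fin_cases b <;>
        first
          | exact absurd hab (by decide)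
          | exact h1 | exact h2 | exact h1.trans h2
    refine ⟨OrderEmbedding.ofStrictMono ![i,j,k] hmono, fun a b => ?_⟩
    have hv : (![0,1,2] : Fin 3 → Fin 3) a < ![0,1,2] b ↔ a < b := by revert a b; decide
    rw [hv]
    constructor
    · exact key a b
    · intro h
      by_contra hab
      rcases eq_or_lt_of_le (not_lt.mp hab) with heq | hlt
      · rw [heq] at h; exact lt_irrefl _ h
      · exact lt_asymm h (key b a hlt)

lemma not_patt_iff {n : ℕ} (π : Fin n → Fin n) : ¬ PattContains ![0,1,2] π ↔ AV π := by
  rw [patt_iff]; push_neg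
  constructor
  · intro h a b c hab hbc h1 h2
    exact absurd h2 (not_lt.mpr (h a b c hab hbc h1))
  · intro h a b c hab hbc h1
    exact le_of_not_gt (h hab hbc h1)


def insFun (π : Fin n → Fin n) (i : Fin (n+1)) : Fin (n+1) → Fin (n+1) :=
  i.insertNth (Fin.last n) (Fin.castSucc ∘ π)

@[simp] lemma insFun_same (π : Fin n → Fin n) (i : Fin (n+1)) :
    insFun π i i = Fin.last n := Fin.insertNth_apply_same ..

@[simp] lemma insFun_succAbove (π : Fin n → Fin n) (i : Fin (n+1)) (j : Fin n) :
    insFun π i (i.succAbove j) = (π j).castSucc := Fin.insertNth_apply_succAbove ..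

lemma insFun_injective {π : Fin n → Fin n} (hπ : Function.Injective π) (i : Fin (n+1)) :
    Function.Injective (insFun π i) := by
  intro x y hxy
  by_cases hx : x = i
  · subst hx
    by_cases hy : y = x
    · exact hy.symm
    · obtain ⟨b, rfl⟩ := Fin.exists_succAbove_eq hy
      rw [insFun_same, insFun_succAbove] at hxy
      exact absurd hxy.symm (Fin.castSucc_lt_last _).ne
  · obtain ⟨a, rfl⟩ := Fin.exists_succAbove_eq hx
    by_cases hy : y = i
    · subst hy
      rw [insFun_same, insFun_succAbove] at hxy
      exact absurd hxy (Fin.castSucc_lt_last _).ne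
    · obtain ⟨b, rfl⟩ := Fin.exists_succAbove_eq hy
      rw [insFun_succAbove, insFun_succAbove] at hxy
      rw [hπ (Fin.castSucc_inj.mp hxy)]

lemma AV_insFun {π : Fin n → Fin n} (hπ : Function.Injective π) (i : Fin (n+1)) :
    AV (insFun π i) ↔ AV π ∧ Dec π (i : ℕ) := by
  constructor
  · intro h
    constructor
    · intro a b c hab hbc h1 h2
      refine h (i := i.succAbove a) (j := i.succAbove b) (k := i.succAbove c)
        (Fin.succAbove_lt_succAbove_iff.mpr hab) (Fin.succAbove_lt_succAbove_iff.mpr hbc)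
        ?_ ?_ <;> rw [insFun_succAbove, insFun_succAbove]
      · exact Fin.castSucc_lt_castSucc_iff.mpr h1
      · exact Fin.castSucc_lt_castSucc_iff.mpr h2
    · intro a b hab hb
      by_contra hle
      have h1 : π a < π b := by
        rcases lt_or_gt_of_ne (hπ.ne (ne_of_lt hab)) with h | h
        · exact h
        · exact absurd h hle
      have hcb : Fin.castSucc b < i := by
        rw [Fin.lt_def]; simpa using hb
      have hsb : i.succAbove b < i := (Fin.succAbove_lt_iff_castSucc_lt i b).mpr hcb
      have hsab : i.succAbove a < i.succAbove b := Fin.succAbove_lt_succAbove_iff.mpr hab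
      refine h hsab hsb ?_ ?_
      · rw [insFun_succAbove, insFun_succAbove]
        exact Fin.castSucc_lt_castSucc_iff.mpr h1
      · rw [insFun_succAbove, insFun_same]
        exact Fin.castSucc_lt_last _
  · rintro ⟨hAV, hDec⟩ p q r hpq hqr h1 h2
    have hq : q ≠ i := by
      rintro rfl
      rw [insFun_same] at h2
      exact absurd h2 (not_lt.mpr (Fin.le_last _))
    have hp : p ≠ i := by
      rintro rfl
      rw [insFun_same] at h1
      exact absurd h1 (not_lt.mpr (Fin.le_last _))
    obtain ⟨a, rfl⟩ := Fin.exists_succAbove_eq hp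
    obtain ⟨b, rfl⟩ := Fin.exists_succAbove_eq hq
    have hab : a < b := Fin.succAbove_lt_succAbove_iff.mp hpq
    rw [insFun_succAbove, insFun_succAbove, Fin.castSucc_lt_castSucc_iff] at h1
    rcases eq_or_ne r i with rfl | hr
    · have hcb : Fin.castSucc b < r := (Fin.succAbove_lt_iff_castSucc_lt r b).mp hqr
      have : π b < π a := hDec hab (by rw [Fin.lt_def] at hcb; simpa using hcb)
      exact lt_asymm h1 this
    · obtain ⟨c, rfl⟩ := Fin.exists_succAbove_eq hr
      have hbc : b < c := Fin.succAbove_lt_succAbove_iff.mp hqr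
      rw [insFun_succAbove, insFun_succAbove, Fin.castSucc_lt_castSucc_iff] at h2
      exact hAV hab hbc h1 h2

lemma dec_insFun_of_le {π : Fin n → Fin n} {i : Fin (n+1)} {m : ℕ} (hm : m ≤ (i : ℕ)) :
    Dec (insFun π i) m ↔ Dec π m := by
  have key : ∀ c : Fin n, (c : ℕ) < (i : ℕ) → insFun π i (Fin.castSucc c) = Fin.castSucc (π c) := by
    intro c hc
    rw [← Fin.succAbove_of_castSucc_lt i c (by rw [Fin.lt_def]; simpa using hc), insFun_succAbove]
  constructor
  · intro h a b hab hb
    have hbi : (b : ℕ) < (i : ℕ) := lt_of_lt_of_le hb hm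
    have hai : (a : ℕ) < (i : ℕ) := lt_trans hab hbi
    have := h (a := Fin.castSucc a) (b := Fin.castSucc b)
      (Fin.castSucc_lt_castSucc_iff.mpr hab) (by simpa using hb)
    rw [key a hai, key b hbi] at this
    exact Fin.castSucc_lt_castSucc_iff.mp (this)
  · intro h p q hpq hq
    have hqi : (q : ℕ) < (i : ℕ) := lt_of_lt_of_le hq hm
    have hpi : (p : ℕ) < (i : ℕ) := lt_trans hpq hqi
    have hqn : (q : ℕ) < n := by have := i.isLt; omega
    have hpn : (p : ℕ) < n := by have := i.isLt; omega
    set a : Fin n := ⟨(p : ℕ), hpn⟩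
    set b : Fin n := ⟨(q : ℕ), hqn⟩
    have hpa : p = Fin.castSucc a := by ext; simp [a]
    have hqb : q = Fin.castSucc b := by ext; simp [b]
    rw [hpa, hqb, key a hpi, key b hqi]
    exact Fin.castSucc_lt_castSucc_iff.mpr (h (a := a) (b := b) hpq hq)

lemma not_dec_insFun {π : Fin n → Fin n} {i : Fin (n+1)} {m : ℕ}
    (hi : 1 ≤ (i : ℕ)) (hm : (i : ℕ) < m) : ¬ Dec (insFun π i) m := by
  intro h
  have hlt : (⟨(i : ℕ) - 1, by have := i.isLt; omega⟩ : Fin (n+1)) < i := by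
    rw [Fin.lt_def]; show (i : ℕ) - 1 < (i : ℕ); omega
  have := h hlt hm
  rw [insFun_same] at this
  exact absurd this (not_lt.mpr (Fin.le_last _))

lemma dec_insFun_zero {π : Fin n → Fin n} {m : ℕ} (hm : 1 ≤ m) :
    Dec (insFun π 0) m ↔ Dec π (m - 1) := by
  have hsucc : ∀ j : Fin n, (0 : Fin (n+1)).succAbove j = j.succ := fun j => rfl
  constructor
  · intro h a b hab hb
    have := h (a := a.succ) (b := b.succ) (Fin.succ_lt_succ_iff.mpr hab) (by simp; omega)
    rw [← hsucc a, ← hsucc b, insFun_succAbove, insFun_succAbove] at this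
    exact Fin.castSucc_lt_castSucc_iff.mp this
  · intro h p q hpq hq
    have hq0 : q ≠ 0 := by
      intro h0
      rw [h0, Fin.lt_def] at hpq
      simp at hpq
    obtain ⟨b, rfl⟩ := Fin.exists_succAbove_eq hq0
    rcases eq_or_ne p 0 with rfl | hp0
    · rw [insFun_same, insFun_succAbove]
      exact Fin.castSucc_lt_last _
    · obtain ⟨a, rfl⟩ := Fin.exists_succAbove_eq hp0
      have hab : a < b := Fin.succAbove_lt_succAbove_iff.mp hpq
      rw [insFun_succAbove, insFun_succAbove, Fin.castSucc_lt_castSucc_iff]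
      refine h hab ?_
      rw [hsucc b] at hq
      simp at hq
      omega


noncomputable def insPerm (π : Equiv.Perm (Fin n)) (i : Fin (n+1)) : Equiv.Perm (Fin (n+1)) :=
  Equiv.ofBijective (insFun (⇑π) i) ((Finite.injective_iff_bijective).mp (insFun_injective π.injective i))

@[simp] lemma insPerm_apply (π : Equiv.Perm (Fin n)) (i : Fin (n+1)) (x : Fin (n+1)) :
    insPerm π i x = insFun (⇑π) i x := rfl

noncomputable def Φ : Equiv.Perm (Fin n) × Fin (n+1) → Equiv.Perm (Fin (n+1)) :=
  fun p => insPerm p.1 p.2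

lemma Φ_bijective : Function.Bijective (Φ (n := n)) := by
  constructor
  · rintro ⟨π, i⟩ ⟨π', i'⟩ h
    have hfun : ∀ x, insFun (⇑π) i x = insFun (⇑π') i' x := by
      intro x
      have := congrArg (fun e : Equiv.Perm (Fin (n+1)) => e x) h
      simpa [Φ] using this
    have hii : i = i' := by
      by_contra hne
      obtain ⟨b, hb⟩ := Fin.exists_succAbove_eq (x := i) (y := i') (Ne.symm (Ne.symm hne))
      have := hfun i
      rw [insFun_same, ← hb, insFun_succAbove] at this
      exact absurd this.symm (Fin.castSucc_lt_last _).ne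
    subst hii
    have hπ : π = π' := by
      ext j
      have := hfun (i.succAbove j)
      rw [insFun_succAbove, insFun_succAbove, Fin.castSucc_inj] at this
      exact congrArg Fin.val this
    rw [hπ]
  · intro τ
    set i := τ.symm (Fin.last n) with hi
    have hτi : τ i = Fin.last n := τ.apply_symm_apply _
    have hne : ∀ j : Fin n, τ (i.succAbove j) ≠ Fin.last n := by
      intro j h
      exact Fin.succAbove_ne i j (τ.injective (h.trans hτi.symm))
    have hπ0inj : Function.Injective (fun j : Fin n => (τ (i.succAbove j)).castPred (hne j)) := by
      intro a b hab
      simp only at hab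
      have := τ.injective (Fin.castPred_inj.mp hab)
      exact Fin.succAbove_right_injective this
    refine ⟨(Equiv.ofBijective _ ((Finite.injective_iff_bijective).mp hπ0inj), i), ?_⟩
    apply Equiv.ext
    intro x
    by_cases hx : x = i
    · subst hx
      simp [Φ, hτi]
    · obtain ⟨a, rfl⟩ := Fin.exists_succAbove_eq hx
      simp only [Φ, insPerm_apply, insFun_succAbove, Equiv.ofBijective_apply]
      exact Fin.castSucc_castPred _ _

noncomputable def insEquiv : Equiv.Perm (Fin n) × Fin (n+1) ≃ Equiv.Perm (Fin (n+1)) :=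
  Equiv.ofBijective Φ Φ_bijective

@[simp] lemma insEquiv_apply (p : Equiv.Perm (Fin n) × Fin (n+1)) (x : Fin (n+1)) :
    (insEquiv p : Equiv.Perm (Fin (n+1))) x = insFun (⇑p.1) p.2 x := rfl

lemma insEquiv_coe (p : Equiv.Perm (Fin n) × Fin (n+1)) :
    ⇑(insEquiv p) = insFun (⇑p.1) p.2 := rfl


lemma card_filter_val_lt {N c : ℕ} (hc : c ≤ N) :
    (univ.filter fun m : Fin N => (m : ℕ) < c).card = c := by
  rcases Nat.lt_or_ge c N with hlt | hge
  · have h : (univ.filter fun m : Fin N => (m : ℕ) < c) = Finset.Iio (⟨c, hlt⟩ : Fin N) := by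
      ext a
      simp [Finset.mem_Iio, Fin.lt_def]
    rw [h, Fin.card_Iio]
  · have hc' : c = N := le_antisymm hc hge
    subst hc'
    have h : (univ.filter fun m : Fin c => (m : ℕ) < c) = univ := by
      apply Finset.filter_true_of_mem
      intro x _
      exact x.isLt
    rw [h, Finset.card_univ, Fintype.card_fin]

lemma labelN_insFun_pos {π : Fin n → Fin n} {i : Fin (n+1)} (hi : 1 ≤ (i : ℕ))
    (hdec : Dec π (i : ℕ)) : labelN (insFun π i) = (i : ℕ) + 1 := by
  have hcong : ∀ m : Fin (n+2), m ∈ univ → (Dec (insFun π i) (m : ℕ) ↔ ((m : ℕ) < (i : ℕ) + 1)) := by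
    intro m _
    by_cases h : (m : ℕ) ≤ (i : ℕ)
    · exact iff_of_true ((dec_insFun_of_le h).mpr (hdec.anti h)) (by omega)
    · exact iff_of_false (not_dec_insFun hi (by omega)) (by omega)
  have heq : (univ.filter fun m : Fin (n+2) => Dec (insFun π i) (m : ℕ))
      = univ.filter fun m : Fin (n+2) => (m : ℕ) < (i : ℕ) + 1 := Finset.filter_congr hcong
  rw [labelN, heq, card_filter_val_lt (by have := i.isLt; omega)]

lemma labelN_insFun_zero (π : Fin n → Fin n) : labelN (insFun π 0) = labelN π + 1 := by
  have hcong : ∀ m : Fin (n+2), m ∈ univ →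
      (Dec (insFun π 0) (m : ℕ) ↔ ((m : ℕ) < labelN π + 1)) := by
    intro m _
    by_cases h0 : (m : ℕ) = 0
    · exact iff_of_true (by rw [h0]; exact dec_zero _) (by omega)
    · rw [dec_insFun_zero (by omega)]
      have hb : (m : ℕ) - 1 < n + 1 := by have := m.isLt; omega
      rw [show ((m : ℕ) - 1) = ((⟨(m : ℕ) - 1, hb⟩ : Fin (n+1)) : ℕ) from rfl,
        dec_iff_lt_labelN π ⟨(m : ℕ) - 1, hb⟩]
      simp only [Fin.val_mk]
      omega
  have heq : (univ.filter fun m : Fin (n+2) => Dec (insFun π 0) (m : ℕ))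
      = univ.filter fun m : Fin (n+2) => (m : ℕ) < labelN π + 1 := Finset.filter_congr hcong
  rw [labelN, heq, card_filter_val_lt (by have := labelN_le π; omega)]

def F (n m : ℕ) : ℕ := Fintype.card {π : Equiv.Perm (Fin n) // AV ⇑π ∧ labelN ⇑π = m}
def G (n k : ℕ) : ℕ := Fintype.card {π : Equiv.Perm (Fin n) // AV ⇑π ∧ k ≤ labelN ⇑π}

lemma fiber_card (π : Equiv.Perm (Fin n)) (m : ℕ) (hm : 2 ≤ m) :
    Fintype.card {i : Fin (n+1) // AV (insFun ⇑π i) ∧ labelN (insFun ⇑π i) = m}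
      = if AV ⇑π ∧ m - 1 ≤ labelN ⇑π then 1 else 0 := by
  by_cases hAV : AV ⇑π
  · by_cases hL : m - 1 ≤ labelN ⇑π
    · rw [if_pos ⟨hAV, hL⟩]
      rw [Fintype.card_eq_one_iff]
      rcases eq_or_lt_of_le hL with hEq | hLt
      · -- labelN π = m - 1, the site is 0
        refine ⟨⟨0, ?_, ?_⟩, ?_⟩
        · exact (AV_insFun π.injective 0).mpr ⟨hAV, by show Dec ⇑π ((0 : Fin (n+1)) : ℕ); rw [Fin.val_zero]; exact dec_zero _⟩
        · rw [show (0 : Fin (n+1)) = (0 : Fin (n+1)) from rfl, labelN_insFun_zero]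
          omega
        · rintro ⟨i, hi1, hi2⟩
          have hdec : Dec ⇑π (i : ℕ) := ((AV_insFun π.injective i).mp hi1).2
          by_cases h0 : (i : ℕ) = 0
          · exact Subtype.ext (Fin.ext (by simpa using h0))
          · rw [labelN_insFun_pos (by omega) hdec] at hi2
            have := (dec_iff_lt_labelN ⇑π i).mp hdec
            omega
      · -- m - 1 < labelN π, the site is m - 1 ≥ 1
        have hmn : m - 1 < n + 1 := by have := labelN_le ⇑π; omega
        set i0 : Fin (n+1) := ⟨m - 1, hmn⟩ with hi0
        have hdec0 : Dec ⇑π (i0 : ℕ) := (dec_iff_lt_labelN ⇑π i0).mpr (by simp [hi0]; omega)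
        refine ⟨⟨i0, ?_, ?_⟩, ?_⟩
        · exact (AV_insFun π.injective i0).mpr ⟨hAV, hdec0⟩
        · rw [labelN_insFun_pos (by simp [hi0]; omega) hdec0]
          simp [hi0]
          omega
        · rintro ⟨i, hi1, hi2⟩
          have hdec : Dec ⇑π (i : ℕ) := ((AV_insFun π.injective i).mp hi1).2
          by_cases h0 : (i : ℕ) = 0
          · have : i = 0 := Fin.ext (by simpa using h0)
            subst this
            rw [labelN_insFun_zero] at hi2
            omega
          · rw [labelN_insFun_pos (by omega) hdec] at hi2
            exact Subtype.ext (Fin.ext (by simp [hi0]; omega))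
    · rw [if_neg (by tauto)]
      rw [Fintype.card_eq_zero_iff]
      constructor
      rintro ⟨i, hi1, hi2⟩
      have hdec : Dec ⇑π (i : ℕ) := ((AV_insFun π.injective i).mp hi1).2
      by_cases h0 : (i : ℕ) = 0
      · have : i = 0 := Fin.ext (by simpa using h0)
        subst this
        rw [labelN_insFun_zero] at hi2
        omega
      · rw [labelN_insFun_pos (by omega) hdec] at hi2
        have := (dec_iff_lt_labelN ⇑π i).mp hdec
        have := labelN_le ⇑π
        omega
  · rw [if_neg (by tauto)]
    rw [Fintype.card_eq_zero_iff]
    constructor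
    rintro ⟨i, hi1, _⟩
    exact hAV ((AV_insFun π.injective i).mp hi1).1

lemma F_succ (n m : ℕ) (hm : 2 ≤ m) : F (n+1) m = G n (m-1) := by
  have e1 : {p : Equiv.Perm (Fin n) × Fin (n+1) //
        AV ⇑(insEquiv p) ∧ labelN ⇑(insEquiv p) = m}
      ≃ {τ : Equiv.Perm (Fin (n+1)) // AV ⇑τ ∧ labelN ⇑τ = m} :=
    Equiv.subtypeEquiv insEquiv (fun p => Iff.rfl)
  have h1 : F (n+1) m = Fintype.card {p : Equiv.Perm (Fin n) × Fin (n+1) //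
      AV (insFun (⇑p.1) p.2) ∧ labelN (insFun (⇑p.1) p.2) = m} := by
    rw [F, ← Fintype.card_congr e1]
    apply Fintype.card_congr
    apply Equiv.subtypeEquivRight
    intro p
    rw [insEquiv_coe]
  rw [h1]
  have e2 : {p : Equiv.Perm (Fin n) × Fin (n+1) //
      AV (insFun (⇑p.1) p.2) ∧ labelN (insFun (⇑p.1) p.2) = m}
      ≃ Σ π : Equiv.Perm (Fin n), {i : Fin (n+1) //
          AV (insFun (⇑π) i) ∧ labelN (insFun (⇑π) i) = m} :=
    Equiv.subtypeProdEquivSigmaSubtype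
      (fun (π : Equiv.Perm (Fin n)) (i : Fin (n+1)) => AV (insFun (⇑π) i) ∧ labelN (insFun (⇑π) i) = m)
  rw [Fintype.card_congr e2, Fintype.card_sigma]
  have : ∀ π : Equiv.Perm (Fin n),
      Fintype.card {i : Fin (n+1) // AV (insFun (⇑π) i) ∧ labelN (insFun (⇑π) i) = m}
        = if AV ⇑π ∧ m - 1 ≤ labelN ⇑π then 1 else 0 := fun π => fiber_card π m hm
  rw [Finset.sum_congr rfl (fun π _ => this π)]
  rw [G, Fintype.card_subtype, Finset.card_filter]

lemma G_eq_sum (n k : ℕ) : G n k = ∑ ℓ ∈ Icc k (n+1), F n ℓ := by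
  rw [G, Fintype.card_subtype]
  rw [Finset.card_eq_sum_card_fiberwise (f := fun π : Equiv.Perm (Fin n) => labelN ⇑π) (t := Icc k (n+1))
    (fun π hπ => by
      rw [Finset.mem_coe, Finset.mem_filter] at hπ
      rw [Finset.mem_coe, Finset.mem_Icc]
      exact ⟨hπ.2.2, labelN_le _⟩)]
  apply Finset.sum_congr rfl
  intro ℓ hℓ
  rw [Finset.mem_Icc] at hℓ
  rw [F, Fintype.card_subtype, Finset.filter_filter]
  congr 1
  apply Finset.filter_congr
  intro π _
  constructor
  · rintro ⟨⟨h1, _⟩, h3⟩; exact ⟨h1, h3⟩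
  · rintro ⟨h1, h3⟩; exact ⟨⟨h1, by omega⟩, h3⟩

lemma F_eq_zero_low {n m : ℕ} (hn : 1 ≤ n) (hm : m < 2) : F n m = 0 := by
  rw [F, Fintype.card_eq_zero_iff]
  constructor
  rintro ⟨π, _, hL⟩
  have := two_le_labelN hn ⇑π
  omega

lemma F_eq_zero_high {n m : ℕ} (hm : n + 1 < m) : F n m = 0 := by
  rw [F, Fintype.card_eq_zero_iff]
  constructor
  rintro ⟨π, _, hL⟩
  have := labelN_le ⇑π
  omega

lemma F_one_two : F 1 2 = 1 := by
  rw [F, Fintype.card_eq_one_iff]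
  refine ⟨⟨1, ?_, ?_⟩, ?_⟩
  · intro i j k hij _ _
    have hi : (i : ℕ) = 0 := by have := i.isLt; omega
    have hj : (j : ℕ) = 0 := by have := j.isLt; omega
    rw [Fin.lt_def, hi, hj] at hij
    omega
  · have : (univ.filter fun i : Fin 2 => Dec (⇑(1 : Equiv.Perm (Fin 1))) (i : ℕ)) = univ := by
      apply Finset.filter_true_of_mem
      intro x _
      intro a b hab _
      have ha : (a : ℕ) = 0 := by have := a.isLt; omega
      have hb : (b : ℕ) = 0 := by have := b.isLt; omega
      rw [Fin.lt_def, ha, hb] at hab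
      omega
    rw [labelN, this, Finset.card_univ, Fintype.card_fin]
  · rintro ⟨π, _, _⟩
    apply Subtype.ext
    apply Equiv.ext
    intro x
    have h2 : ((π x : Fin 1) : ℕ) = 0 := by have := (π x).isLt; omega
    have h3 : (((1 : Equiv.Perm (Fin 1)) x : Fin 1) : ℕ) = 0 := by
      have := (((1 : Equiv.Perm (Fin 1)) x : Fin 1)).isLt; omega
    exact Fin.ext (by rw [h2, h3])

lemma sum_choose_reflect (a b k c : ℕ) (hbc : b ≤ c) (hac : a ≤ c) :
    ∑ ℓ ∈ Icc a b, ((c - ℓ).choose k : ℤ) = ∑ r ∈ Icc (c - b) (c - a), (r.choose k : ℤ) := by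
  apply Finset.sum_nbij' (i := fun ℓ => c - ℓ) (j := fun r => c - r)
  · intro ℓ hℓ; rw [Finset.mem_Icc] at *; omega
  · intro r hr; rw [Finset.mem_Icc] at *; omega
  · intro ℓ hℓ; rw [Finset.mem_Icc] at hℓ; omega
  · intro r hr; rw [Finset.mem_Icc] at hr; omega
  · intro ℓ hℓ; rfl

lemma sum_F_eval (n k : ℕ) (hn : 1 ≤ n) (hk : 1 ≤ k) (hkn : k ≤ n + 1)
    (hF : ∀ ℓ, 1 ≤ ℓ → ℓ ≤ n + 1 →
      (F n ℓ : ℤ) = ((2*n - ℓ).choose (n-1) : ℤ) - ((2*n - ℓ).choose n : ℤ)) :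
    (∑ ℓ ∈ Icc k (n+1), (F n ℓ : ℤ))
      = ((2*n - k + 1).choose n : ℤ) - ((2*n - k + 1).choose (n+1) : ℤ) := by
  have h1 : ∑ ℓ ∈ Icc k (n+1), (F n ℓ : ℤ)
      = (∑ ℓ ∈ Icc k (n+1), ((2*n - ℓ).choose (n-1) : ℤ))
        - ∑ ℓ ∈ Icc k (n+1), ((2*n - ℓ).choose n : ℤ) := by
    rw [← Finset.sum_sub_distrib]
    exact Finset.sum_congr rfl fun ℓ hℓ => by
      rw [Finset.mem_Icc] at hℓ
      exact hF ℓ (by omega) (by omega)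
  rw [h1, sum_choose_reflect _ _ _ _ (by omega) (by omega), sum_choose_reflect _ _ _ _ (by omega) (by omega)]
  have e1 : 2*n - (n+1) = n - 1 := by omega
  rw [e1]
  have hs1 : ∑ r ∈ Icc (n-1) (2*n - k), (r.choose (n-1) : ℤ)
      = ((2*n - k + 1).choose n : ℤ) := by
    have h0 := Nat.sum_Icc_choose (2*n - k) (n-1)
    rw [show n - 1 + 1 = n from by omega] at h0
    exact_mod_cast h0
  have hs2 : ∑ r ∈ Icc (n-1) (2*n - k), (r.choose n : ℤ)
      = ((2*n - k + 1).choose (n+1) : ℤ) := by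
    have hsplit : Icc (n-1) (2*n - k) = insert (n-1) (Icc n (2*n - k)) := by
      ext x; simp [Finset.mem_Icc, Finset.mem_insert]; omega
    rw [hsplit, Finset.sum_insert (by simp [Finset.mem_Icc]; omega)]
    have h0 : (∑ r ∈ Icc n (2*n - k), (r.choose n : ℤ)) = ((2*n - k + 1).choose (n+1) : ℤ) := by
      exact_mod_cast Nat.sum_Icc_choose (2*n - k) n
    rw [Nat.choose_eq_zero_of_lt (by omega : n - 1 < n), Nat.cast_zero, zero_add, h0]
  rw [hs1, hs2]

lemma F_formula : ∀ n, 1 ≤ n → ∀ m, 1 ≤ m → m ≤ n + 1 →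
    (F n m : ℤ) = ((2*n - m).choose (n-1) : ℤ) - ((2*n - m).choose n : ℤ) := by
  intro n hn
  induction n, hn using Nat.le_induction with
  | base =>
    intro m hm1 hm2
    interval_cases m
    · rw [F_eq_zero_low le_rfl (by omega)]
      norm_num
    · rw [F_one_two]
      norm_num
  | succ n hn ih =>
    intro m hm1 hm2
    rcases Nat.lt_or_ge m 2 with hm | hm
    · rw [F_eq_zero_low (by omega) hm]
      have h1 : m = 1 := by omega
      subst h1
      have e1 : 2*(n+1) - 1 = 2*n + 1 := by omega
      rw [e1]
      have e2 : (2*n+1).choose (n+1-1) = (2*n+1).choose (n+1) := by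
        have := Nat.choose_symm (show n + 1 ≤ 2*n + 1 by omega)
        rw [show 2*n + 1 - (n+1) = n from by omega] at this
        rw [show n + 1 - 1 = n from by omega]
        exact this
      rw [e2]
      ring
    · rw [F_succ n m hm, G_eq_sum n (m-1)]
      push_cast
      rw [sum_F_eval n (m-1) hn (by omega) (by omega) ih]
      have e1 : 2*n - (m-1) + 1 = 2*(n+1) - m := by omega
      rw [e1]

lemma T_eval (n : ℕ) (hn : 1 ≤ n) :
    (G n 0 : ℤ) = ((2*n).choose n : ℤ) - ((2*n).choose (n+1) : ℤ) := by
  rw [G_eq_sum n 0]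
  have hsplit : Icc 0 (n+1) = insert 0 (Icc 1 (n+1)) := by
    ext x; simp [Finset.mem_Icc, Finset.mem_insert]; omega
  push_cast
  rw [hsplit, Finset.sum_insert (by simp)]
  rw [F_eq_zero_low hn (by omega)]
  rw [sum_F_eval n 1 hn le_rfl (by omega) (F_formula n hn)]
  rw [show 2*n - 1 + 1 = 2*n from by omega]
  simp

lemma G_catalan (n : ℕ) (hn : 1 ≤ n) : G n 0 = catalan n := by
  have h := T_eval n hn
  have h1 : ((n : ℤ)+1) * (catalan n : ℤ) = ((2*n).choose n : ℤ) := by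
    have := succ_mul_catalan_eq_centralBinom n
    rw [Nat.centralBinom_eq_two_mul_choose] at this
    exact_mod_cast this
  have h2 : ((2*n).choose (n+1) : ℤ) * ((n : ℤ)+1) = ((2*n).choose n : ℤ) * n := by
    have := Nat.choose_succ_right_eq (2*n) n
    rw [show 2*n - n = n from by omega] at this
    exact_mod_cast this
  have key : ((n : ℤ)+1) * (G n 0 : ℤ) = ((n : ℤ)+1) * (catalan n : ℤ) := by
    rw [h, h1]
    linear_combination -h2
  have : (G n 0 : ℤ) = (catalan n : ℤ) := by
    apply mul_left_cancel₀ (a := ((n : ℤ)+1)) (by positivity) key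
  exact_mod_cast this

end
end Av123

/-- The number of 123-avoiding permutations of `{1,...,n}` is the `n`-th Catalan number. -/
theorem avoiders_123_eq_catalan :
    ∀ n : ℕ, 0 < n → avoiders (![0,1,2] : Fin 3 → Fin 3) n = catalan n := by
  intro n hn
  rw [avoiders]
  rw [Nat.card_congr (Equiv.subtypeEquivRight (fun π : Equiv.Perm (Fin n) =>
    Av123.not_patt_iff ⇑π))]
  rw [Nat.card_eq_fintype_card]
  have hG : Av123.G n 0 = Fintype.card {π : Equiv.Perm (Fin n) // Av123.AV ⇑π} := by
    rw [Av123.G]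
    apply Fintype.card_congr
    apply Equiv.subtypeEquivRight
    intro π
    simp
  rw [← hG, Av123.G_catalan n hn]
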